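/- For any integer r, the p-adic polylogarithm ln_r^{(p)}(z) = Σ_{n≥1, p∤n} z^n/n^r, viewed as an element of the p-adic completion of Z_p[z, 1/(1-z)], satisfies the functional equation ln_r^{(p)}(z) = (-1)^{r+1} · ln_r^{(p)}(z^{-1}). -/

import Mathlib

/-!
The `p`-adic polylogarithm `ln_r^{(p)}(z) = Σ_{n ≥ 1, p ∤ n} z^n / n^r`, an element of the
`p`-adic completion of `ℤ_p[z, (1-z)⁻¹]`, is here realized pointwise: for `z` with
`‖z‖ = 1` and `‖1 - z‖ = 1` (so that both `z` and `1 - z` are units of the completion),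
its value is the limit of the partial expressions
`(1 - z^{p^s})⁻¹ · Σ_{1 ≤ n < p^s, p ∤ n} z^n / n^r`.
-/

open Filter

/-- The `s`-th partial expression computing the `p`-adic polylogarithm
`ln_r^{(p)}(z) = lim_s (1 - z^{p^s})⁻¹ Σ_{1 ≤ n < p^s, p ∤ n} z^n / n^r`. -/
noncomputable def polylogSeq (p : ℕ) [Fact p.Prime] (r : ℤ) (z : ℚ_[p]) (s : ℕ) : ℚ_[p] :=
  (1 - z ^ p ^ s)⁻¹ *
    ∑ n ∈ Finset.range (p ^ s), if ¬ (p ∣ n) then z ^ n * (n : ℚ_[p]) ^ (-r) else 0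

/-- `L` is the value of the `p`-adic polylogarithm `ln_r^{(p)}` at `z`. -/
def IsPolylog (p : ℕ) [Fact p.Prime] (r : ℤ) (z L : ℚ_[p]) : Prop :=
  Tendsto (polylogSeq p r z) atTop (nhds L)

section Aux
variable {p : ℕ} [hp : Fact p.Prime]

lemma norm_pow_sub_pow (a b : ℚ_[p]) (ha : ‖a‖ ≤ 1) (hb : ‖b‖ ≤ 1) (n : ℕ) :
    ‖a ^ n - b ^ n‖ ≤ ‖a - b‖ := by
  induction n with
  | zero => simp
  | succ n ih =>
    have h1 : a ^ (n+1) - b ^ (n+1) = a ^ n * (a - b) + (a ^ n - b ^ n) * b := by ring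
    rw [h1]
    refine le_trans (Padic.nonarchimedean _ _) (max_le ?_ ?_)
    · rw [norm_mul]
      calc ‖a^n‖ * ‖a - b‖ ≤ 1 * ‖a - b‖ := by
            exact mul_le_mul_of_nonneg_right (by rw [norm_pow]; exact pow_le_one₀ (norm_nonneg a) ha) (norm_nonneg _)
        _ = ‖a - b‖ := one_mul _
    · rw [norm_mul]
      calc ‖a^n - b^n‖ * ‖b‖ ≤ ‖a - b‖ * 1 := mul_le_mul ih hb (norm_nonneg _) (norm_nonneg _)
        _ = ‖a - b‖ := mul_one _

lemma norm_zpow_sub_zpow (a b : ℚ_[p]) (ha : ‖a‖ = 1) (hb : ‖b‖ = 1) (k : ℤ) :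
    ‖a ^ k - b ^ k‖ ≤ ‖a - b‖ := by
  have ha0 : a ≠ 0 := by intro h; rw [h] at ha; simp at ha
  have hb0 : b ≠ 0 := by intro h; rw [h] at hb; simp at hb
  rcases k with n | n
  · simpa using norm_pow_sub_pow a b ha.le hb.le n
  · rw [zpow_negSucc, zpow_negSucc]
    have hA : a ^ (n+1) ≠ 0 := pow_ne_zero _ ha0
    have hB : b ^ (n+1) ≠ 0 := pow_ne_zero _ hb0
    have h1 : (a ^ (n+1))⁻¹ - (b ^ (n+1))⁻¹
        = (b ^ (n+1) - a ^ (n+1)) * ((a ^ (n+1))⁻¹ * (b ^ (n+1))⁻¹) := by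
      field_simp
    rw [h1, norm_mul, norm_mul, norm_inv, norm_inv, norm_pow, norm_pow, ha, hb]
    simpa [norm_sub_rev] using norm_pow_sub_pow b a hb.le ha.le (n+1)

lemma norm_pow_card_sub (z : ℚ_[p]) (hz : ‖z‖ ≤ 1) : ‖z ^ p - z‖ ≤ (p : ℝ)⁻¹ := by
  set y : ℤ_[p] := ⟨z, hz⟩ with hy
  have hdvd : (p : ℤ_[p]) ∣ y ^ p - y := by
    have : PadicInt.toZMod (y ^ p - y) = 0 := by
      simp [map_sub, map_pow, ZMod.pow_card]
    rw [← Ideal.mem_span_singleton, ← PadicInt.maximalIdeal_eq_span_p,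
      ← PadicInt.ker_toZMod, RingHom.mem_ker]
    exact this
  obtain ⟨c, hc⟩ := hdvd
  have : ‖y ^ p - y‖ ≤ (p : ℝ)⁻¹ := by
    rw [hc, norm_mul, PadicInt.norm_p]
    calc (p:ℝ)⁻¹ * ‖c‖ ≤ (p:ℝ)⁻¹ * 1 :=
        mul_le_mul_of_nonneg_left c.norm_le_one (by positivity)
      _ = (p:ℝ)⁻¹ := mul_one _
  simpa [PadicInt.norm_def] using this

lemma norm_pow_pow_sub (z : ℚ_[p]) (hz : ‖z‖ ≤ 1) (s : ℕ) :
    ‖z ^ p ^ s - z‖ ≤ (p : ℝ)⁻¹ := by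
  induction s with
  | zero => simp
  | succ s ih =>
    have hw : ‖z ^ p ^ s‖ ≤ 1 := by
      rw [norm_pow]; exact pow_le_one₀ (norm_nonneg z) hz
    have h1 : z ^ p ^ (s+1) - z = ((z ^ p ^ s) ^ p - z ^ p ^ s) + (z ^ p ^ s - z) := by
      rw [← pow_mul, ← pow_succ]; ring
    rw [h1]
    exact le_trans (Padic.nonarchimedean _ _)
      (max_le (norm_pow_card_sub _ hw) ih)

lemma norm_one_sub_pow_pow (z : ℚ_[p]) (hz : ‖z‖ = 1) (h1z : ‖1 - z‖ = 1) (s : ℕ) :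
    ‖1 - z ^ p ^ s‖ = 1 := by
  have h1 : (1 : ℚ_[p]) - z ^ p ^ s = (1 - z) + (z - z ^ p ^ s) := by ring
  have hlt : ‖z - z ^ p ^ s‖ < ‖1 - z‖ := by
    rw [h1z, norm_sub_rev]
    calc ‖z ^ p ^ s - z‖ ≤ (p : ℝ)⁻¹ := norm_pow_pow_sub z hz.le s
      _ < 1 := by
        rw [inv_lt_one_iff₀]
        exact Or.inr (by exact_mod_cast hp.out.one_lt)
  rw [h1, Padic.add_eq_max_of_ne (ne_of_lt hlt).symm]
  rw [h1z]; exact max_eq_left (le_of_lt (h1z ▸ hlt))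

lemma norm_nat_of_not_dvd {n : ℕ} (h : ¬ p ∣ n) : ‖(n : ℚ_[p])‖ = 1 := by
  refine le_antisymm (by exact_mod_cast Padic.norm_int_le_one (n : ℤ)) ?_
  by_contra hlt
  push_neg at hlt
  have : (p : ℤ) ∣ (n : ℤ) := by
    rw [← Padic.norm_intCast_lt_one_iff]; exact_mod_cast hlt
  exact h (by exact_mod_cast this)

lemma neg_one_zpow_sq (r : ℤ) : ((-1 : ℚ_[p]) ^ r) * ((-1 : ℚ_[p]) ^ r) = 1 := by
  rw [← zpow_add₀ (by norm_num : (-1:ℚ_[p]) ≠ 0)]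
  have : r + r = 2 * r := by ring
  rw [this, zpow_mul]
  norm_num

lemma polylog_key (r : ℤ) (z : ℚ_[p]) (hz : ‖z‖ = 1) (h1z : ‖1 - z‖ = 1) (s : ℕ) :
    ‖polylogSeq p r z s - (-1 : ℚ_[p]) ^ (r+1) * polylogSeq p r z⁻¹ s‖ ≤ ((p:ℝ)⁻¹) ^ s := by
  have hz0 : z ≠ 0 := by intro h; rw [h] at hz; simp at hz
  set N := p ^ s with hN
  have hN0 : 0 < N := pow_pos hp.out.pos s
  rcases Nat.eq_zero_or_pos s with h0 | hs
  -- case s = 0 : both sequences are 0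
  · subst h0
    have : polylogSeq p r z 0 = 0 ∧ polylogSeq p r z⁻¹ 0 = 0 := by
      constructor <;> · simp [polylogSeq]
    rw [this.1, this.2]
    simp
  have hpN : p ∣ N := dvd_pow_self p hs.ne'
  have hzN0 : z ^ N ≠ 0 := pow_ne_zero _ hz0
  have h1zN : ‖1 - z ^ N‖ = 1 := norm_one_sub_pow_pow z hz h1z s
  have h1zN0 : (1 : ℚ_[p]) - z ^ N ≠ 0 := by
    intro h; rw [h] at h1zN; simp at h1zN
  have hnormN : ‖(N : ℚ_[p])‖ = ((p:ℝ)⁻¹) ^ s := by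
    rw [hN]
    push_cast
    rw [norm_pow, Padic.norm_p]
  -- inverse relation
  have hinv1 : (1 : ℚ_[p]) - z⁻¹ ^ N = -(z⁻¹ ^ N) * (1 - z ^ N) := by
    rw [neg_mul, mul_sub, mul_one, ← mul_pow, inv_mul_cancel₀ hz0, one_pow]; ring
  have hinv : ((1 : ℚ_[p]) - z⁻¹ ^ N)⁻¹ = -(z ^ N) * (1 - z ^ N)⁻¹ := by
    rw [hinv1, mul_inv, inv_neg, inv_pow, inv_inv]
  -- reindexing
  have reindex :
      (∑ n ∈ Finset.range N, if ¬ (p ∣ n) then z ^ N * z⁻¹ ^ n * (n : ℚ_[p]) ^ (-r) else 0)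
      = ∑ n ∈ Finset.range N,
          if ¬ (p ∣ n) then z ^ n * (((N - n : ℕ)) : ℚ_[p]) ^ (-r) else 0 := by
    refine Finset.sum_nbij' (fun n => (N - n) % N) (fun n => (N - n) % N) ?_ ?_ ?_ ?_ ?_
    · intro a _; exact Finset.mem_range.mpr (Nat.mod_lt _ hN0)
    · intro a _; exact Finset.mem_range.mpr (Nat.mod_lt _ hN0)
    · intro a ha
      rcases Nat.eq_zero_or_pos a with h | h
      · simp [h, Nat.mod_self]
      · have haN : a < N := Finset.mem_range.mp ha
        rw [Nat.mod_eq_of_lt (show N - a < N by omega), Nat.sub_sub_self haN.le,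
          Nat.mod_eq_of_lt haN]
    · intro a ha
      rcases Nat.eq_zero_or_pos a with h | h
      · simp [h, Nat.mod_self]
      · have haN : a < N := Finset.mem_range.mp ha
        rw [Nat.mod_eq_of_lt (show N - a < N by omega), Nat.sub_sub_self haN.le,
          Nat.mod_eq_of_lt haN]
    · intro n hn
      have hnN : n < N := Finset.mem_range.mp hn
      rcases Nat.eq_zero_or_pos n with h | h
      · simp [h, Nat.mod_self]
      · have hmod : (N - n) % N = N - n := Nat.mod_eq_of_lt (by omega)
        rw [hmod]
        have hdvd : p ∣ n ↔ p ∣ (N - n) := by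
          constructor
          · intro hd; exact Nat.dvd_sub hpN hd
          · intro hd
            have := Nat.dvd_sub hpN hd
            rwa [Nat.sub_sub_self hnN.le] at this
        by_cases hc : p ∣ n
        · simp [hc, hdvd.mp hc]
        · rw [if_pos hc, if_pos (fun h => hc (hdvd.mpr h))]
          rw [Nat.sub_sub_self hnN.le]
          congr 1
          rw [inv_pow, ← pow_sub₀ z hz0 hnN.le]
  -- rewrite polylogSeq z⁻¹
  have hT : (-1 : ℚ_[p]) ^ (r+1) * polylogSeq p r z⁻¹ s
      = (1 - z ^ N)⁻¹ *
          ∑ n ∈ Finset.range N,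
            if ¬ (p ∣ n) then
              (-1 : ℚ_[p]) ^ r * (z ^ n * (((N - n : ℕ)) : ℚ_[p]) ^ (-r)) else 0 := by
    rw [polylogSeq, ← hN, hinv]
    rw [show ((-1 : ℚ_[p]) ^ (r+1)) = -((-1 : ℚ_[p]) ^ r) by
      rw [zpow_add_one₀ (by norm_num : (-1:ℚ_[p]) ≠ 0)]; ring]
    have : z ^ N * ∑ n ∈ Finset.range N, (if ¬ (p ∣ n) then z⁻¹ ^ n * (n : ℚ_[p]) ^ (-r) else 0)
        = ∑ n ∈ Finset.range N,
            if ¬ (p ∣ n) then z ^ n * (((N - n : ℕ)) : ℚ_[p]) ^ (-r) else 0 := by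
      rw [← reindex, Finset.mul_sum]
      exact Finset.sum_congr rfl fun n _ => by
        by_cases hc : p ∣ n <;> simp [hc, mul_assoc]
    have hsum : (∑ n ∈ Finset.range N,
          if ¬ (p ∣ n) then (-1:ℚ_[p]) ^ r * (z ^ n * (((N - n : ℕ)) : ℚ_[p]) ^ (-r)) else 0)
        = (-1:ℚ_[p]) ^ r *
          (z ^ N * ∑ n ∈ Finset.range N, if ¬ (p ∣ n) then z⁻¹ ^ n * (n : ℚ_[p]) ^ (-r) else 0) := by
      rw [this, Finset.mul_sum]
      exact Finset.sum_congr rfl fun n _ => by by_cases hc : p ∣ n <;> simp [hc]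
    rw [hsum]
    ring
  -- final bound
  rw [polylogSeq, ← hN, hT, ← mul_sub, ← Finset.sum_sub_distrib, norm_mul, norm_inv, h1zN,
    inv_one, one_mul]
  apply IsUltrametricDist.norm_sum_le_of_forall_le_of_nonneg (by positivity)
  intro n hn
  by_cases hc : p ∣ n
  · simp only [hc, not_true_eq_false, if_false, sub_zero, norm_zero]
    positivity
  · rw [if_pos hc, if_pos hc]
    have hn0 : 0 < n := by
      rcases Nat.eq_zero_or_pos n with h | h
      · exact absurd (h ▸ dvd_zero p) hc
      · exact h
    have hnN : n < N := Finset.mem_range.mp hn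
    have hcast : (((N - n : ℕ)) : ℚ_[p]) = (N : ℚ_[p]) - n := by
      push_cast [Nat.cast_sub hnN.le]; ring
    have ha : ‖(n : ℚ_[p])‖ = 1 := norm_nat_of_not_dvd hc
    have hNlt : ‖(N : ℚ_[p])‖ < 1 := by
      rw [hnormN]
      apply pow_lt_one₀ (by positivity) _ hs.ne'
      rw [inv_lt_one_iff₀]
      exact Or.inr (by exact_mod_cast hp.out.one_lt)
    have hb : ‖(n : ℚ_[p]) - N‖ = 1 := by
      rw [sub_eq_add_neg, Padic.add_eq_max_of_ne
        (by rw [ha, norm_neg]; exact fun h => absurd (h ▸ hNlt) (by norm_num)), ha, norm_neg]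
      exact max_eq_left hNlt.le
    have hflip : (-1 : ℚ_[p]) ^ r * (((N : ℚ_[p]) - n) ^ (-r))
        = ((n : ℚ_[p]) - N) ^ (-r) := by
      rw [show (N : ℚ_[p]) - n = (-1) * ((n : ℚ_[p]) - N) by ring, mul_zpow, ← mul_assoc,
        ← zpow_add₀ (show (-1 : ℚ_[p]) ≠ 0 by norm_num), add_neg_cancel, zpow_zero, one_mul]
    calc ‖z ^ n * (n : ℚ_[p]) ^ (-r) - (-1 : ℚ_[p]) ^ r * (z ^ n * (((N - n : ℕ)) : ℚ_[p]) ^ (-r))‖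
        = ‖z ^ n‖ * ‖(n : ℚ_[p]) ^ (-r) - ((n : ℚ_[p]) - N) ^ (-r)‖ := by
          rw [hcast, show z ^ n * (n : ℚ_[p]) ^ (-r)
              - (-1 : ℚ_[p]) ^ r * (z ^ n * (((N : ℚ_[p]) - n)) ^ (-r))
              = z ^ n * ((n : ℚ_[p]) ^ (-r)
                - (-1 : ℚ_[p]) ^ r * (((N : ℚ_[p]) - n)) ^ (-r)) by ring, hflip, norm_mul]
      _ ≤ 1 * ‖(n : ℚ_[p]) - ((n : ℚ_[p]) - N)‖ := by
          apply mul_le_mul _ (norm_zpow_sub_zpow _ _ ha hb (-r)) (norm_nonneg _) zero_le_one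
          rw [norm_pow, hz, one_pow]
      _ = ((p:ℝ)⁻¹) ^ s := by
          rw [one_mul, show (n : ℚ_[p]) - ((n : ℚ_[p]) - N) = (N : ℚ_[p]) by ring, hnormN]

end Aux

/-- For any integer `r`, the `p`-adic polylogarithm satisfies the
functional equation `ln_r^{(p)}(z) = (-1)^{r+1} · ln_r^{(p)}(z⁻¹)`. -/
theorem polylog_inv_functional_equation (p : ℕ) [Fact p.Prime] (r : ℤ)
    (z L L' : ℚ_[p]) (hz : ‖z‖ = 1) (h1z : ‖1 - z‖ = 1)
    (hL : IsPolylog p r z L) (hL' : IsPolylog p r z⁻¹ L') :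
    L = (-1 : ℚ_[p]) ^ (r + 1) * L' := by
  have hp := ‹Fact p.Prime›
  unfold IsPolylog at hL hL'
  have t1 : Tendsto (fun s => polylogSeq p r z s - (-1 : ℚ_[p]) ^ (r+1) * polylogSeq p r z⁻¹ s)
      atTop (nhds (L - (-1 : ℚ_[p]) ^ (r+1) * L')) := hL.sub (hL'.const_mul _)
  have t2 : Tendsto (fun s => polylogSeq p r z s - (-1 : ℚ_[p]) ^ (r+1) * polylogSeq p r z⁻¹ s)
      atTop (nhds 0) := by
    apply squeeze_zero_norm (fun s => polylog_key r z hz h1z s)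
    apply tendsto_pow_atTop_nhds_zero_of_lt_one (by positivity)
    rw [inv_lt_one_iff₀]
    exact Or.inr (by exact_mod_cast hp.out.one_lt)
  have h := tendsto_nhds_unique t1 t2
  exact sub_eq_zero.mp h
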